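/- Let C be a finite set of parties partitioned into three classes: {c_1}, A₋₁, and Ā. Let there be n voters, voter i having a linear order O_i on C and a nonnegative swap-price function sw_i : C × C → ℝ≥0, where the swap cost of a linear order Ô relative to O_i is the sum of sw_i(x,y) over all inverted pairs (x,y) of (O_i,Ô). For a voter i and a class κ ∈ {{c_1}, A₋₁, Ā}, let δ_i(κ) = min over parties c ∈ κ of Σ_{x above c in O_i} sw_i(x,c). Then for all integers k_1, k_2 ≥ 0 with k_1 + k_2 ≤ n, the minimum of Σ_i (swap cost of Ô_i relative to O_i) over all tuples (Ô_1,…,Ô_n) of linear orders with |{i : the top party of Ô_i is c_1}| = k_1 and |{i : the top party of Ô_i is in A₋₁}| = k_2 equals the minimum over functions α assigning each voter one of the three classes, with exactly k_1 voters assigned {c_1} and exactly k_2 voters assigned A₋₁, of Σ_i δ_i(α(i)). -/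

import Mathlib

open Finset

namespace Stmt16

/-- The inverted pairs of `(O, Ob)`: pairs `(x, y)` with `y` below `x` in `O`
and `y` above `x` in `Ob`. -/
def invPairs {C : Type*} [Fintype C] [DecidableEq C]
    (O Ob : C ≃ Fin (Fintype.card C)) : Finset (C × C) :=
  (Finset.univ : Finset (C × C)).filter fun q => O q.1 < O q.2 ∧ Ob q.2 < Ob q.1

/-- `δ_i(κ)`: the minimum over the parties `c` of the class `κ` (class `0` is `{c₁}`,
class `1` is `A₋₁`, class `2` is `Ā`) of `Σ_{x above c in O_i} sw_i(x,c)`. -/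
noncomputable def delta {C : Type*} [Fintype C] [DecidableEq C] {n : ℕ}
    (c1 : C) (A1 Abar : Finset C) (hA1 : A1.Nonempty) (hAbar : Abar.Nonempty)
    (O : Fin n → (C ≃ Fin (Fintype.card C))) (sw : Fin n → C → C → ℝ)
    (i : Fin n) (κ : Fin 3) : ℝ :=
  if κ = 0 then
    ∑ x ∈ Finset.univ.filter (fun x => O i x < O i c1), sw i x c1
  else if κ = 1 then
    A1.inf' hA1 (fun c => ∑ x ∈ Finset.univ.filter (fun x => O i x < O i c), sw i x c)
  else
    Abar.inf' hAbar (fun c => ∑ x ∈ Finset.univ.filter (fun x => O i x < O i c), sw i x c)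

lemma delta_zero {C : Type*} [Fintype C] [DecidableEq C] {n : ℕ}
    (c1 : C) (A1 Abar : Finset C) (hA1 : A1.Nonempty) (hAbar : Abar.Nonempty)
    (O : Fin n → (C ≃ Fin (Fintype.card C))) (sw : Fin n → C → C → ℝ) (i : Fin n) :
    delta c1 A1 Abar hA1 hAbar O sw i 0 =
      ∑ x ∈ Finset.univ.filter (fun x => O i x < O i c1), sw i x c1 := by
  rfl

lemma delta_one {C : Type*} [Fintype C] [DecidableEq C] {n : ℕ}
    (c1 : C) (A1 Abar : Finset C) (hA1 : A1.Nonempty) (hAbar : Abar.Nonempty)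
    (O : Fin n → (C ≃ Fin (Fintype.card C))) (sw : Fin n → C → C → ℝ) (i : Fin n) :
    delta c1 A1 Abar hA1 hAbar O sw i 1 =
      A1.inf' hA1 (fun c => ∑ x ∈ Finset.univ.filter (fun x => O i x < O i c), sw i x c) := by
  rfl

lemma delta_two {C : Type*} [Fintype C] [DecidableEq C] {n : ℕ}
    (c1 : C) (A1 Abar : Finset C) (hA1 : A1.Nonempty) (hAbar : Abar.Nonempty)
    (O : Fin n → (C ≃ Fin (Fintype.card C))) (sw : Fin n → C → C → ℝ) (i : Fin n) :
    delta c1 A1 Abar hA1 hAbar O sw i 2 =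
      Abar.inf' hAbar (fun c => ∑ x ∈ Finset.univ.filter (fun x => O i x < O i c), sw i x c) := by
  rfl

lemma fin3_eq_two (κ : Fin 3) (h0 : κ ≠ 0) (h1 : κ ≠ 1) : κ = 2 := by fin_cases κ <;> simp_all

lemma cyc_self_val {m : ℕ} (p : Fin m) : (p.cycleRange p).val = 0 := by
  cases m with
  | zero => exact p.elim0
  | succ m' => rw [Fin.cycleRange_self]; rfl

lemma cyc_iff {m : ℕ} (p a b : Fin m) :
    (a < b ∧ p.cycleRange b < p.cycleRange a) ↔ (b = p ∧ a < p) := by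
  cases m with
  | zero => exact p.elim0
  | succ m' =>
    rcases lt_trichotomy b p with hb | hb | hb
    · constructor
      · rintro ⟨h1, h2⟩
        exfalso
        rw [Fin.lt_def, Fin.coe_cycleRange_of_lt hb,
          Fin.coe_cycleRange_of_lt (h1.trans hb)] at h2
        have := Fin.lt_def.mp h1
        omega
      · rintro ⟨rfl, -⟩
        exact absurd hb (lt_irrefl _)
    · subst hb
      constructor
      · rintro ⟨h1, -⟩; exact ⟨rfl, h1⟩
      · rintro ⟨-, h⟩
        refine ⟨h, ?_⟩
        rw [Fin.cycleRange_self, Fin.lt_def, Fin.coe_cycleRange_of_lt h]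
        simp only [Fin.val_zero]
        omega
    · constructor
      · rintro ⟨h1, h2⟩
        exfalso
        rw [Fin.cycleRange_of_gt hb] at h2
        rcases lt_trichotomy a p with ha | ha | ha
        · rw [Fin.lt_def, Fin.coe_cycleRange_of_lt ha] at h2
          have := Fin.lt_def.mp ha
          have := Fin.lt_def.mp hb
          omega
        · subst ha
          rw [Fin.cycleRange_self] at h2
          exact absurd h2 (by simp [Fin.lt_def])
        · rw [Fin.cycleRange_of_gt ha] at h2
          exact absurd h1 (not_lt.mpr h2.le)
      · rintro ⟨rfl, -⟩
        exact absurd hb (lt_irrefl _)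

lemma invPairs_cycle {C : Type*} [Fintype C] [DecidableEq C]
    (O : C ≃ Fin (Fintype.card C)) (c : C) :
    invPairs O (O.trans (Fin.cycleRange (O c))) =
      (Finset.univ.filter fun x => O x < O c).image (fun x => (x, c)) := by
  ext ⟨x, y⟩
  rw [invPairs, mem_filter]
  simp only [mem_univ, true_and, mem_image, Equiv.trans_apply,
    Equiv.Perm.coe_mul]
  rw [show ((Fin.cycleRange (O c)) (O y) < (Fin.cycleRange (O c)) (O x)) =
      ((O c).cycleRange (O y) < (O c).cycleRange (O x)) from rfl]
  rw [show (O x < O y ∧ (O c).cycleRange (O y) < (O c).cycleRange (O x)) ↔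
      (O y = O c ∧ O x < O c) from cyc_iff (O c) (O x) (O y)]
  constructor
  · rintro ⟨hy, hx⟩
    exact ⟨x, by simpa using hx, by simp [O.injective hy]⟩
  · rintro ⟨z, hz, hzx⟩
    rw [Prod.mk.injEq] at hzx
    obtain ⟨rfl, rfl⟩ := hzx
    exact ⟨rfl, by simpa using hz⟩

lemma cost_cycle {C : Type*} [Fintype C] [DecidableEq C]
    (O : C ≃ Fin (Fintype.card C)) (c : C) (g : C → C → ℝ) :
    ∑ q ∈ invPairs O (O.trans (Fin.cycleRange (O c))), g q.1 q.2 =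
      ∑ x ∈ Finset.univ.filter (fun x => O x < O c), g x c := by
  rw [invPairs_cycle]
  exact Finset.sum_image (fun x _ y _ h => (Prod.mk.injEq _ _ _ _ ▸ h).1)

lemma cost_lower {C : Type*} [Fintype C] [DecidableEq C]
    (O Ob : C ≃ Fin (Fintype.card C)) (c : C) (hc : (Ob c).val = 0)
    (g : C → C → ℝ) (hg : ∀ x y, 0 ≤ g x y) :
    ∑ x ∈ Finset.univ.filter (fun x => O x < O c), g x c ≤
      ∑ q ∈ invPairs O Ob, g q.1 q.2 := by
  have himg : ∑ q ∈ (Finset.univ.filter fun x => O x < O c).image (fun x => (x, c)),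
      g q.1 q.2 = ∑ x ∈ Finset.univ.filter (fun x => O x < O c), g x c :=
    Finset.sum_image (fun x _ y _ h => (Prod.mk.injEq _ _ _ _ ▸ h).1)
  rw [← himg]
  apply Finset.sum_le_sum_of_subset_of_nonneg
  · intro q hq
    simp only [mem_image, mem_filter, mem_univ, true_and] at hq
    obtain ⟨z, hz, rfl⟩ := hq
    simp only [invPairs, mem_filter, mem_univ, true_and]
    refine ⟨hz, ?_⟩
    have hne : z ≠ c := fun h => absurd hz (by simp [h])
    have : Ob z ≠ Ob c := fun h => hne (Ob.injective h)
    rw [Fin.lt_def, hc]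
    omega
  · intro q _ _
    exact hg q.1 q.2


/-- the minimum total swap cost over bribes in which exactly `k₁` voters
end up voting for `c₁` and exactly `k₂` voters end up voting for a party of `A₋₁`
equals the minimum of `Σ_i δ_i(α(i))` over class assignments `α` with exactly `k₁`
voters assigned to `{c₁}` and exactly `k₂` voters assigned to `A₋₁`. -/
theorem stmt_16 {C : Type*} [Fintype C] [DecidableEq C]
    (c1 : C) (A1 Abar : Finset C)
    (hpart : ({c1} : Finset C) ∪ A1 ∪ Abar = Finset.univ)
    (hd1 : c1 ∉ A1) (hd2 : c1 ∉ Abar) (hd3 : Disjoint A1 Abar)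
    (hA1 : A1.Nonempty) (hAbar : Abar.Nonempty)
    (n : ℕ) (O : Fin n → (C ≃ Fin (Fintype.card C)))
    (sw : Fin n → C → C → ℝ) (hsw : ∀ i x y, 0 ≤ sw i x y)
    (k1 k2 : ℕ) (hk : k1 + k2 ≤ n) :
    sInf { x : ℝ | ∃ Ob : Fin n → (C ≃ Fin (Fintype.card C)),
        (Finset.univ.filter fun i => ((Ob i) c1).val = 0).card = k1 ∧
        (Finset.univ.filter fun i => ∃ c ∈ A1, ((Ob i) c).val = 0).card = k2 ∧
        x = ∑ i, ∑ q ∈ invPairs (O i) (Ob i), sw i q.1 q.2 } =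
    sInf { x : ℝ | ∃ α : Fin n → Fin 3,
        (Finset.univ.filter fun i => α i = 0).card = k1 ∧
        (Finset.univ.filter fun i => α i = 1).card = k2 ∧
        x = ∑ i, delta c1 A1 Abar hA1 hAbar O sw i (α i) } := by
  set S : Set ℝ := { x : ℝ | ∃ Ob : Fin n → (C ≃ Fin (Fintype.card C)),
        (Finset.univ.filter fun i => ((Ob i) c1).val = 0).card = k1 ∧
        (Finset.univ.filter fun i => ∃ c ∈ A1, ((Ob i) c).val = 0).card = k2 ∧
        x = ∑ i, ∑ q ∈ invPairs (O i) (Ob i), sw i q.1 q.2 } with hSdef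
  set T : Set ℝ := { x : ℝ | ∃ α : Fin n → Fin 3,
        (Finset.univ.filter fun i => α i = 0).card = k1 ∧
        (Finset.univ.filter fun i => α i = 1).card = k2 ∧
        x = ∑ i, delta c1 A1 Abar hA1 hAbar O sw i (α i) } with hTdef
  classical
  have hCpos : 0 < Fintype.card C := Fintype.card_pos_iff.mpr ⟨c1⟩
  choose f1 hf1mem hf1val using fun i : Fin n =>
    A1.exists_mem_eq_inf' hA1
      (fun c => ∑ x ∈ Finset.univ.filter (fun x => O i x < O i c), sw i x c)
  choose f2 hf2mem hf2val using fun i : Fin n =>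
    Abar.exists_mem_eq_inf' hAbar
      (fun c => ∑ x ∈ Finset.univ.filter (fun x => O i x < O i c), sw i x c)
  -- T ⊆ S
  have hTS : T ⊆ S := by
    rintro x ⟨α, hk1, hk2, rfl⟩
    set ch : Fin n → C := fun i => if α i = 0 then c1 else if α i = 1 then f1 i else f2 i
      with hch
    set Ob : Fin n → (C ≃ Fin (Fintype.card C)) :=
      fun i => (O i).trans (Fin.cycleRange (O i (ch i))) with hOb
    have htop : ∀ i, ((Ob i) (ch i)).val = 0 := fun i => cyc_self_val (O i (ch i))
    have huniq : ∀ i (d : C), ((Ob i) d).val = 0 → d = ch i := by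
      intro i d hd
      exact (Ob i).injective (Fin.ext (hd.trans (htop i).symm))
    have hch0 : ∀ i, ch i = c1 ↔ α i = 0 := by
      intro i
      by_cases h0 : α i = 0
      · simp [hch, h0]
      · simp only [hch, if_neg h0]
        by_cases h1 : α i = 1
        · simp only [if_pos h1]
          exact ⟨fun h => absurd (h ▸ hf1mem i) hd1, fun h => absurd h h0⟩
        · simp only [if_neg h1]
          exact ⟨fun h => absurd (h ▸ hf2mem i) hd2, fun h => absurd h h0⟩
    have hchA : ∀ i, ch i ∈ A1 ↔ α i = 1 := by
      intro i
      by_cases h0 : α i = 0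
      · simp only [hch, if_pos h0]
        exact ⟨fun h => absurd h hd1, fun h => absurd (h0.symm.trans h) (by decide)⟩
      · simp only [hch, if_neg h0]
        by_cases h1 : α i = 1
        · simp [h1, hf1mem i]
        · simp only [if_neg h1]
          exact ⟨fun h => absurd h (Finset.disjoint_right.mp hd3 (hf2mem i)),
            fun h => absurd h h1⟩
    refine ⟨Ob, ?_, ?_, ?_⟩
    · rw [← hk1]
      congr 1
      apply Finset.filter_congr
      intro i _
      constructor
      · intro h
        exact (hch0 i).mp (huniq i c1 h).symm
      · intro h
        have hc : ch i = c1 := (hch0 i).mpr h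
        exact hc ▸ htop i
    · rw [← hk2]
      congr 1
      apply Finset.filter_congr
      intro i _
      constructor
      · rintro ⟨c, hcA, hc0⟩
        exact (hchA i).mp ((huniq i c hc0) ▸ hcA)
      · intro h
        exact ⟨ch i, (hchA i).mpr h, htop i⟩
    · apply Finset.sum_congr rfl
      intro i _
      rw [show Ob i = (O i).trans (Fin.cycleRange (O i (ch i))) from rfl,
        cost_cycle (O i) (ch i) (sw i)]
      by_cases h0 : α i = 0
      · have hc : ch i = c1 := by simp [hch, h0]
        rw [hc, h0, delta_zero]
      · by_cases h1 : α i = 1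
        · have hc : ch i = f1 i := by simp [hch, h0, h1]
          rw [hc, h1, delta_one]
          exact hf1val i
        · have h2 : α i = 2 := fin3_eq_two (α i) h0 h1
          have hc : ch i = f2 i := by simp [hch, h0, h1]
          rw [hc, h2, delta_two]
          exact hf2val i
  -- every element of S dominates an element of T
  have hST : ∀ x ∈ S, ∃ y ∈ T, y ≤ x := by
    rintro x ⟨Ob, hk1, hk2, rfl⟩
    set α : Fin n → Fin 3 := fun i =>
      if ((Ob i) c1).val = 0 then 0
      else if (∃ c ∈ A1, ((Ob i) c).val = 0) then 1 else 2 with hα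
    set tp : Fin n → C := fun i => (Ob i).symm ⟨0, hCpos⟩ with htp
    have h0i : ∀ i, ((Ob i) (tp i)).val = 0 := by
      intro i; simp [htp]
    have huniq : ∀ i (d : C), ((Ob i) d).val = 0 → d = tp i := by
      intro i d hd
      exact (Ob i).injective (Fin.ext (hd.trans (h0i i).symm))
    have hcount1 : (Finset.univ.filter fun i => α i = 0).card = k1 := by
      rw [← hk1]
      congr 1
      apply Finset.filter_congr
      intro i _
      by_cases hc0 : ((Ob i) c1).val = 0
      · simp [hα, hc0]
      · simp only [hα, if_neg hc0]
        constructor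
        · intro h
          exfalso
          by_cases hc1 : ∃ c ∈ A1, ((Ob i) c).val = 0
          · rw [if_pos hc1] at h; exact absurd h (by decide)
          · rw [if_neg hc1] at h; exact absurd h (by decide)
        · intro h; exact absurd h hc0
    have hcount2 : (Finset.univ.filter fun i => α i = 1).card = k2 := by
      rw [← hk2]
      congr 1
      apply Finset.filter_congr
      intro i _
      by_cases hc0 : ((Ob i) c1).val = 0
      · simp only [hα, if_pos hc0]
        constructor
        · intro h; exact absurd h (by decide)
        · rintro ⟨c, hcA, hcv⟩
          have : c = c1 := (Ob i).injective (Fin.ext (hcv.trans hc0.symm))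
          exact absurd (this ▸ hcA) hd1
      · simp only [hα, if_neg hc0]
        by_cases hc1 : ∃ c ∈ A1, ((Ob i) c).val = 0
        · rw [if_pos hc1]
          exact ⟨fun _ => hc1, fun _ => rfl⟩
        · simp only [if_neg hc1]
          exact ⟨fun h => absurd h (by decide), fun h => absurd h hc1⟩
    refine ⟨∑ i, delta c1 A1 Abar hA1 hAbar O sw i (α i), ?_, ?_⟩
    · rw [hTdef]
      exact ⟨α, hcount1, hcount2, rfl⟩
    · apply Finset.sum_le_sum
      intro i _
      have hlow := cost_lower (O i) (Ob i) (tp i) (h0i i) (sw i) (hsw i)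
      refine le_trans ?_ hlow
      by_cases hc0 : ((Ob i) c1).val = 0
      · have hαi : α i = 0 := by simp [hα, hc0]
        have htpc : c1 = tp i := huniq i c1 hc0
        rw [hαi, delta_zero, ← htpc]
      · by_cases hc1 : ∃ c ∈ A1, ((Ob i) c).val = 0
        · have hαi : α i = 1 := by simp [hα, hc0, hc1]
          obtain ⟨c, hcA, hcv⟩ := hc1
          have hctp : c = tp i := huniq i c hcv
          rw [hαi, delta_one]
          exact Finset.inf'_le _ (hctp ▸ hcA)
        · have hαi : α i = 2 := by simp [hα, hc0, hc1]
          have htpA : tp i ∈ Abar := by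
            have hmem : tp i ∈ ({c1} : Finset C) ∪ A1 ∪ Abar := hpart ▸ mem_univ _
            simp only [Finset.mem_union, Finset.mem_singleton] at hmem
            rcases hmem with (h | h) | h
            · exact absurd (h ▸ h0i i) hc0
            · exact absurd ⟨tp i, h, h0i i⟩ hc1
            · exact h
          rw [hαi, delta_two]
          exact Finset.inf'_le _ htpA
  -- T is nonempty
  have hT0 : T.Nonempty := by
    obtain ⟨B1, hB1sub, hB1card⟩ :=
      Finset.exists_subset_card_eq (s := (Finset.univ : Finset (Fin n))) (n := k1) (by simp; omega)
    obtain ⟨B2, hB2sub, hB2card⟩ :=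
      Finset.exists_subset_card_eq (s := (Finset.univ : Finset (Fin n)) \ B1) (n := k2)
        (by rw [Finset.card_sdiff_of_subset hB1sub]; simp [hB1card]; omega)
    set α0 : Fin n → Fin 3 := fun i => if i ∈ B1 then 0 else if i ∈ B2 then 1 else 2
      with hα0
    have hcard1 : (Finset.univ.filter fun i => α0 i = 0).card = k1 := by
      rw [← hB1card]
      congr 1
      ext i
      simp only [mem_filter, mem_univ, true_and, hα0]
      by_cases hb1 : i ∈ B1
      · simp [hb1]
      · rw [if_neg hb1]
        constructor
        · intro h
          exfalso
          by_cases hb2 : i ∈ B2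
          · rw [if_pos hb2] at h; exact absurd h (by decide)
          · rw [if_neg hb2] at h; exact absurd h (by decide)
        · intro h; exact absurd h hb1
    have hcard2 : (Finset.univ.filter fun i => α0 i = 1).card = k2 := by
      rw [← hB2card]
      congr 1
      ext i
      simp only [mem_filter, mem_univ, true_and, hα0]
      by_cases hb1 : i ∈ B1
      · have hnb2 : i ∉ B2 := fun h => (Finset.mem_sdiff.mp (hB2sub h)).2 hb1
        rw [if_pos hb1]
        constructor
        · intro h; exact absurd h (by decide)
        · intro h; exact absurd h hnb2
      · rw [if_neg hb1]
        by_cases hb2 : i ∈ B2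
        · simp [hb2]
        · rw [if_neg hb2]
          constructor
          · intro h; exact absurd h (by decide)
          · intro h; exact absurd h hb2
    refine ⟨∑ i, delta c1 A1 Abar hA1 hAbar O sw i (α0 i), ?_⟩
    rw [hTdef]
    exact ⟨α0, hcard1, hcard2, rfl⟩
  -- finiteness
  have hSfin : S.Finite := by
    rw [hSdef]
    apply Set.Finite.subset (Set.finite_range
      (fun Ob : Fin n → (C ≃ Fin (Fintype.card C)) =>
        ∑ i, ∑ q ∈ invPairs (O i) (Ob i), sw i q.1 q.2))
    rintro x ⟨Ob, -, -, rfl⟩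
    exact ⟨Ob, rfl⟩
  have hTfin : T.Finite := by
    rw [hTdef]
    apply Set.Finite.subset (Set.finite_range
      (fun α : Fin n → Fin 3 => ∑ i, delta c1 A1 Abar hA1 hAbar O sw i (α i)))
    rintro x ⟨α, -, -, rfl⟩
    exact ⟨α, rfl⟩
  obtain ⟨x0, hx0T⟩ := hT0
  apply le_antisymm
  · exact csInf_le_csInf hSfin.bddBelow ⟨x0, hx0T⟩ hTS
  · refine le_csInf ⟨x0, hTS hx0T⟩ ?_
    intro b hb
    obtain ⟨y, hyT, hyb⟩ := hST b hb
    exact (csInf_le hTfin.bddBelow hyT).trans hyb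


end Stmt16
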